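/- Let X be a Banach space, f : X → ℝ ∪ {+∞} lower semicontinuous, and −∞ < α < β ≤ +∞, τ > 0. If the strong slope satisfies |∇f|(x) ≥ 1/τ for all x with α < f(x) < β, then for every γ ∈ [α, β) and every x with γ < f(x) < β one has τ(f(x) − γ) ≥ dist(x, {f ≤ γ}). -/

import Mathlib

open Topology Filter
open scoped ENNReal

-- The strong slope: `0` at local minimizers, otherwise
-- `limsup_{y→x} (f(x) − f(y))₊ / ‖x − y‖`, with values in `ℝ≥0∞`.
open Classical in
noncomputable def strongSlope {X : Type*} [NormedAddCommGroup X]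
    (f : X → EReal) (x : X) : ℝ≥0∞ :=
  if IsLocalMin f x then 0
  else Filter.limsup (fun y => ENNReal.ofReal ((f x - f y).toReal / dist x y)) (𝓝[≠] x)

open Set in

lemma ekeland_ennreal {X : Type*} [PseudoEMetricSpace X] [CompleteSpace X]
    (h : X → ℝ≥0∞) (hlsc : LowerSemicontinuous h)
    (c : ℝ≥0∞) (hc0 : c ≠ 0) (hctop : c ≠ ⊤)
    (x : X) (hx : h x ≠ ⊤) :
    ∃ z, h z + c * edist x z ≤ h x ∧ ∀ y, h z ≤ h y + c * edist z y := by
  classical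
  set S : X → Set X := fun w => {u | h u + c * edist w u ≤ h w} with hS
  have hSself : ∀ w, w ∈ S w := by
    intro w; simp [hS]
  have key : ∀ (n : ℕ) (w : X), ∃ u, h w ≠ ⊤ →
      u ∈ S w ∧ h u ≤ sInf (h '' S w) + ((n : ℝ≥0∞) + 1)⁻¹ := by
    intro n w
    by_cases hw : h w = ⊤
    · exact ⟨w, fun h' => absurd hw h'⟩
    · have h1 : sInf (h '' S w) ≤ h w := sInf_le (Set.mem_image_of_mem _ (hSself w))
      have h2 : sInf (h '' S w) < sInf (h '' S w) + ((n : ℝ≥0∞) + 1)⁻¹ :=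
        ENNReal.lt_add_right (by intro hh; exact hw (top_le_iff.mp (hh ▸ h1)))
          (by simp)
      obtain ⟨v, ⟨u, hu, rfl⟩, hv⟩ := sInf_lt_iff.mp h2
      exact ⟨u, fun _ => ⟨hu, hv.le⟩⟩
  choose F hF using key
  set seq : ℕ → X := fun n => Nat.recAux x (fun n w => F n w) n with hseq
  have hseq0 : seq 0 = x := rfl
  have hseqS : ∀ n, seq (n + 1) = F n (seq n) := fun n => rfl
  have hfin : ∀ n, h (seq n) ≠ ⊤ := by
    intro n; induction n with
    | zero => exact hx
    | succ n ih =>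
      have := (hF n (seq n) ih).1
      rw [← hseqS n] at this
      intro htop
      exact ih (top_le_iff.mp (le_trans (by rw [← htop]; exact le_add_right le_rfl) this))
  have hstep : ∀ n, h (seq (n + 1)) + c * edist (seq n) (seq (n + 1)) ≤ h (seq n) := by
    intro n; have := (hF n (seq n) (hfin n)).1; rwa [← hseqS n] at this
  have hmono : ∀ n, h (seq (n+1)) ≤ h (seq n) :=
    fun n => le_trans (le_add_right le_rfl) (hstep n)
  have hinf : ∀ n y, y ∈ S (seq n) → h (seq (n + 1)) ≤ h y + ((n : ℝ≥0∞) + 1)⁻¹ := by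
    intro n y hy
    have := (hF n (seq n) (hfin n)).2
    rw [← hseqS n] at this
    exact le_trans this (add_le_add_left (sInf_le (Set.mem_image_of_mem _ hy)) _)
  have hchain : ∀ n m, n ≤ m → h (seq m) + c * edist (seq n) (seq m) ≤ h (seq n) := by
    intro n m hnm
    induction m, hnm using Nat.le_induction with
    | base => simp
    | succ m hnm ih =>
      calc h (seq (m+1)) + c * edist (seq n) (seq (m+1))
          ≤ h (seq (m+1)) + c * (edist (seq n) (seq m) + edist (seq m) (seq (m+1))) := by
            gcongr; exact edist_triangle _ _ _
        _ = (h (seq (m+1)) + c * edist (seq m) (seq (m+1))) + c * edist (seq n) (seq m) := by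
            ring
        _ ≤ h (seq m) + c * edist (seq n) (seq m) := by gcongr; exact hstep m
        _ ≤ h (seq n) := ih
  -- Cauchy
  have hsum : ∀ N, h (seq N) + c * ∑ i ∈ Finset.range N, edist (seq i) (seq (i+1)) ≤ h x := by
    intro N
    induction N with
    | zero => simp [hseq0]
    | succ N ih =>
      calc h (seq (N+1)) + c * ∑ i ∈ Finset.range (N+1), edist (seq i) (seq (i+1))
          = (h (seq (N+1)) + c * edist (seq N) (seq (N+1)))
            + c * ∑ i ∈ Finset.range N, edist (seq i) (seq (i+1)) := by
            rw [Finset.sum_range_succ]; ring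
        _ ≤ h (seq N) + c * ∑ i ∈ Finset.range N, edist (seq i) (seq (i+1)) := by
            gcongr; exact hstep N
        _ ≤ h x := ih
  have htsum : (∑' n, edist (seq n) (seq (n+1))) ≠ ⊤ := by
    have hble : (∑' n, edist (seq n) (seq (n+1))) ≤ h x / c := by
      apply ENNReal.tsum_le_of_sum_range_le
      intro N
      rw [ENNReal.le_div_iff_mul_le (Or.inl hc0) (Or.inl hctop), mul_comm]
      exact le_trans (le_add_left le_rfl) (hsum N)
    exact ne_top_of_le_ne_top (ENNReal.div_lt_top hx hc0).ne hble
  have hcauchy : CauchySeq seq :=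
    cauchySeq_of_edist_le_of_tsum_ne_top _ (fun n => le_rfl) htsum
  obtain ⟨z, hz⟩ := cauchySeq_tendsto_of_complete hcauchy
  have hSclosed : ∀ w, IsClosed (S w) := by
    intro w
    have hcont : Continuous fun u => c * edist w u :=
      (ENNReal.continuous_const_mul hctop).comp (continuous_const.edist continuous_id)
    have : LowerSemicontinuous fun u => h u + c * edist w u :=
      hlsc.add hcont.lowerSemicontinuous
    exact this.isClosed_preimage (h w)
  have hzmem : ∀ n, z ∈ S (seq n) := by
    intro n
    refine (hSclosed (seq n)).mem_of_tendsto hz ?_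
    filter_upwards [eventually_ge_atTop n] with m hm
    exact hchain n m hm
  refine ⟨z, ?_, ?_⟩
  · have := hzmem 0; rwa [hseq0] at this
  · intro y
    by_contra hy
    push_neg at hy
    have hzx : h z ≤ h x := le_trans (le_add_right le_rfl) (by have := hzmem 0; rwa [hseq0] at this)
    have hytop : h y ≠ ⊤ :=
      fun htop => (hfin 0) (top_le_iff.mp (le_trans (by rw [← htop]; exact le_add_right le_rfl)
        (le_trans hy.le (hzx.trans_eq (by rw [hseq0])))))
    have hyS : ∀ n, y ∈ S (seq n) := by
      intro n
      have : h y + c * edist (seq n) y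
          ≤ (h y + c * edist z y) + c * edist (seq n) z := by
        calc h y + c * edist (seq n) y
            ≤ h y + c * (edist (seq n) z + edist z y) := by gcongr; exact edist_triangle _ _ _
          _ = (h y + c * edist z y) + c * edist (seq n) z := by ring
      exact le_trans this (le_trans (add_le_add_left hy.le _) (hzmem n))
    have hzy : ∀ n : ℕ, h z ≤ h y + ((n : ℝ≥0∞) + 1)⁻¹ := by
      intro n
      have h1 : h z ≤ h (seq (n+1)) := le_trans (le_add_right le_rfl) (hzmem (n+1))
      exact le_trans h1 (hinf n y (hyS n))
    have hzley : h z ≤ h y := by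
      refine ENNReal.le_of_forall_pos_le_add fun ε hε _ => ?_
      obtain ⟨n, hn⟩ := ENNReal.exists_inv_nat_lt (a := (ε : ℝ≥0∞))
        (by exact_mod_cast hε.ne')
      refine le_trans (hzy n) (add_le_add_right ?_ _)
      refine le_trans ?_ hn.le
      gcongr
      simp
    exact absurd (lt_of_lt_of_le hy hzley) (by simp)

set_option maxHeartbeats 1000000 in
theorem stmt7 {X : Type*} [NormedAddCommGroup X] [NormedSpace ℝ X] [CompleteSpace X]
    (f : X → EReal) (hlsc : LowerSemicontinuous f)
    (α : ℝ) (β : EReal) (hαβ : (α : EReal) < β) (τ : ℝ) (hτ : 0 < τ)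
    (hslope : ∀ x, (α : EReal) < f x → f x < β →
      ENNReal.ofReal (1 / τ) ≤ strongSlope f x) :
    ∀ γ : ℝ, α ≤ γ → (γ : EReal) < β → ∀ x, (γ : EReal) < f x → f x < β →
      EMetric.infEdist x {y | f y ≤ (γ : EReal)} ≤
        ENNReal.ofReal (τ * ((f x).toReal - γ)) := by
  intro γ hαγ hγβ x hγx hxβ
  classical
  set S : Set X := {y | f y ≤ (γ : EReal)} with hSdef
  have hfxtop : f x ≠ ⊤ := (lt_of_lt_of_le hxβ le_top).ne
  have hfxbot : f x ≠ ⊥ := fun hb => by simp [hb] at hγx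
  set tx : ℝ := (f x).toReal with htx
  have hfx : f x = (tx : EReal) := (EReal.coe_toReal hfxtop hfxbot).symm
  have hγtx : γ < tx := by
    rw [hfx] at hγx; exact_mod_cast hγx
  set δ : ℝ := tx - γ with hδ
  have hδpos : 0 < δ := sub_pos.mpr hγtx
  -- the auxiliary energy
  set h : X → ℝ≥0∞ := fun y =>
    if f y ≤ (γ : EReal) then 0
    else if f y = ⊤ then ⊤ else ENNReal.ofReal ((f y).toReal - γ) with hhdef
  -- basic lower bound helper
  have hub : ∀ (c : ℝ), γ < c → ∀ y, (c : EReal) < f y → ENNReal.ofReal (c - γ) ≤ h y := by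
    intro c hγc y hcy
    have h1 : ¬ f y ≤ (γ : EReal) := not_le.mpr (lt_trans (by exact_mod_cast hγc) hcy)
    by_cases h2 : f y = ⊤
    · simp [hhdef, h1, h2]
    · have h3 : f y ≠ ⊥ := fun hb => by simp [hb] at hcy
      have h4 : c < (f y).toReal := by
        have := (EReal.coe_toReal h2 h3)
        rw [← this] at hcy; exact_mod_cast hcy
      simp only [hhdef, h1, h2, if_false, if_neg]
      exact ENNReal.ofReal_le_ofReal (by linarith)
  have hlsch : LowerSemicontinuous h := by
    intro y b hb
    have hnle : ¬ f y ≤ (γ : EReal) := by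
      intro hle
      simp [hhdef, hle] at hb
    have hγfy : (γ : EReal) < f y := not_le.mp hnle
    -- find c with γ < c, (c:EReal) < f y, b < ofReal (c - γ)
    obtain ⟨c, hγc, hcfy, hbc⟩ :
        ∃ c : ℝ, γ < c ∧ (c : EReal) < f y ∧ b < ENNReal.ofReal (c - γ) := by
      by_cases h2 : f y = ⊤
      · have hbne : b ≠ ⊤ := by simp [hhdef, hnle, h2] at hb; exact hb.ne
        refine ⟨max γ 0 + b.toReal + 1, ?_, ?_, ?_⟩
        · have : (0:ℝ) ≤ b.toReal := ENNReal.toReal_nonneg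
          have h5 : γ ≤ max γ 0 := le_max_left _ _
          linarith
        · rw [h2]; exact EReal.coe_lt_top _
        · rw [ENNReal.lt_ofReal_iff_toReal_lt hbne]
          have h5 : γ ≤ max γ 0 := le_max_left _ _
          linarith
      · have h3 : f y ≠ ⊥ := fun hbt => by simp [hbt] at hγfy
        set ty := (f y).toReal with hty
        have hfy : f y = (ty : EReal) := (EReal.coe_toReal h2 h3).symm
        have hγty : γ < ty := by rw [hfy] at hγfy; exact_mod_cast hγfy
        have hb' : b < ENNReal.ofReal (ty - γ) := by
          simpa [hhdef, hnle, h2] using hb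
        have hbne : b ≠ ⊤ := hb'.ne_top
        have hbty : b.toReal < ty - γ := by
          rwa [ENNReal.lt_ofReal_iff_toReal_lt hbne] at hb'
        obtain ⟨c, hc1, hc2⟩ := exists_between (show max γ (b.toReal + γ) < ty by
          simp only [max_lt_iff]; constructor <;> linarith)
        have hγc : γ < c := lt_of_le_of_lt (le_max_left _ _) hc1
        refine ⟨c, hγc, ?_, ?_⟩
        · rw [hfy]; exact_mod_cast hc2
        · rw [ENNReal.lt_ofReal_iff_toReal_lt hbne]
          have := lt_of_le_of_lt (le_max_right γ (b.toReal + γ)) hc1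
          linarith
    filter_upwards [hlsc y (c : EReal) hcfy] with y' hy'
    exact lt_of_lt_of_le hbc (hub c hγc y' hy')
  -- value at x
  have hhx : h x = ENNReal.ofReal δ := by
    have h1 : ¬ f x ≤ (γ : EReal) := not_le.mpr hγx
    simp [hhdef, h1, hfxtop, hδ, htx]
  by_contra hcon
  push_neg at hcon
  obtain ⟨r, hr0, hr1, hr2⟩ := ENNReal.lt_iff_exists_real_btwn.mp hcon
  have hτδr : τ * δ < r := by
    rwa [ENNReal.ofReal_lt_ofReal_iff_of_nonneg (by positivity)] at hr1
  set τ' : ℝ := r / δ with hτ'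
  have hττ' : τ < τ' := (lt_div_iff₀ hδpos).mpr hτδr
  have hτ'pos : 0 < τ' := lt_trans hτ hττ'
  set c : ℝ≥0∞ := ENNReal.ofReal (1 / τ') with hc
  have hc0 : c ≠ 0 := by
    simp [hc, ENNReal.ofReal_eq_zero, not_le]; positivity
  have hctop : c ≠ ⊤ := ENNReal.ofReal_ne_top
  obtain ⟨z, hz1, hz2⟩ := ekeland_ennreal h hlsch c hc0 hctop x (by
    rw [hhx]; exact ENNReal.ofReal_ne_top)
  rw [hhx] at hz1
  have hzle : h z ≤ ENNReal.ofReal δ := le_trans (le_add_right le_rfl) hz1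
  have hedist : edist x z ≤ ENNReal.ofReal r := by
    have h1 : c * edist x z ≤ ENNReal.ofReal δ := le_trans (le_add_left le_rfl) hz1
    have h2 : edist x z ≤ ENNReal.ofReal δ / c :=
      (ENNReal.le_div_iff_mul_le (Or.inl hc0) (Or.inl hctop)).mpr (by rwa [mul_comm])
    have h3 : ENNReal.ofReal δ / c = ENNReal.ofReal r := by
      rw [hc, ← ENNReal.ofReal_div_of_pos (by positivity)]
      congr 1
      have hrpos : 0 < r := lt_trans (by positivity) hτδr
      rw [hτ']
      field_simp
    rwa [h3] at h2
  have hznS : z ∉ S := by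
    intro hzS
    exact absurd (le_trans (EMetric.infEdist_le_edist_of_mem hzS) hedist) (not_le.mpr hr2)
  have hγfz : (γ : EReal) < f z := not_le.mp hznS
  have hfztop : f z ≠ ⊤ := by
    intro htop
    have : h z = ⊤ := by simp [hhdef, not_le.mpr hγfz, htop]
    rw [this] at hzle
    exact ENNReal.ofReal_ne_top (top_le_iff.mp hzle)
  have hfzbot : f z ≠ ⊥ := fun hbt => by simp [hbt] at hγfz
  set tz := (f z).toReal with htz
  have hfz : f z = (tz : EReal) := (EReal.coe_toReal hfztop hfzbot).symm
  have hγtz : γ < tz := by rw [hfz] at hγfz; exact_mod_cast hγfz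
  have hhz : h z = ENNReal.ofReal (tz - γ) := by
    simp [hhdef, not_le.mpr hγfz, hfztop, htz]
  have htztx : tz ≤ tx := by
    rw [hhz] at hzle
    have := (ENNReal.ofReal_le_ofReal_iff (by positivity)).mp hzle
    rw [hδ] at this; linarith
  have hfzβ : f z < β := lt_of_le_of_lt (by rw [hfz, hfx]; exact_mod_cast htztx) hxβ
  have hαfz : (α : EReal) < f z :=
    lt_of_le_of_lt (by exact_mod_cast hαγ) hγfz
  have hsl := hslope z hαfz hfzβ
  -- slope at z is at most 1/τ'
  have hslup : strongSlope f z ≤ ENNReal.ofReal (1 / τ') := by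
    rw [strongSlope]
    split
    · exact zero_le
    · refine Filter.limsup_le_of_le (by isBoundedDefault) ?_
      have hev1 : ∀ᶠ y in 𝓝[≠] z, (γ : EReal) < f y :=
        (hlsc z (γ : EReal) hγfz).filter_mono nhdsWithin_le_nhds
      filter_upwards [hev1, self_mem_nhdsWithin] with y hy hyne
      have hdpos : 0 < dist z y := dist_pos.mpr (Ne.symm hyne)
      by_cases hytop : f y = ⊤
      · rw [hfz, hytop, EReal.sub_top]
        simp
      · have hybot : f y ≠ ⊥ := fun hbt => by simp [hbt] at hy
        set ty := (f y).toReal with hty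
        have hfy : f y = (ty : EReal) := (EReal.coe_toReal hytop hybot).symm
        have hγty : γ < ty := by rw [hfy] at hy; exact_mod_cast hy
        have hhy : h y = ENNReal.ofReal (ty - γ) := by
          simp [hhdef, not_le.mpr hy, hytop, hty]
        have hz2y := hz2 y
        rw [hhz, hhy, hc, edist_dist, ← ENNReal.ofReal_mul (by positivity),
          ← ENNReal.ofReal_add (by linarith) (mul_nonneg (by positivity) dist_nonneg)] at hz2y
        have hineq : tz - γ ≤ ty - γ + 1 / τ' * dist z y :=
          (ENNReal.ofReal_le_ofReal_iff
            (add_nonneg (by linarith) (mul_nonneg (by positivity) dist_nonneg))).mp hz2y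
        have hsub : (f z - f y).toReal = tz - ty :=
          EReal.toReal_sub hfztop hfzbot hytop hybot
        rw [hsub]
        apply ENNReal.ofReal_le_ofReal
        rw [div_le_iff₀ hdpos]
        calc tz - ty ≤ 1 / τ' * dist z y := by linarith
          _ = 1 / τ' * dist z y := rfl
  have hlt : ENNReal.ofReal (1 / τ') < ENNReal.ofReal (1 / τ) := by
    rw [ENNReal.ofReal_lt_ofReal_iff_of_nonneg (by positivity)]
    exact one_div_lt_one_div_of_lt hτ hττ'
  exact absurd (lt_of_le_of_lt (le_trans hsl hslup) hlt) (lt_irrefl _)
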